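/- For every integer p ≥ 3 and all β > β_0 ≥ log 2 with β_0 > β*(p), one has sup_{x ∈ η_p^{−1}((β,∞))} H_{β_0,p}(x) = sup_{x ∈ (m_*(β,p), 1]} H_{β_0,p}(x); that is, the Bahadur slopes of the maximum pseudolikelihood and maximum likelihood tests coincide whenever the null parameter is at least log 2. -/

import Mathlib

open Real Set Filter

/-- `I(x) = ½[(1+x)log(1+x) + (1−x)log(1−x)]` (with `Real.log 0 = 0`). -/
noncomputable def bahI (x : ℝ) : ℝ :=
  ((1 + x) * Real.log (1 + x) + (1 - x) * Real.log (1 - x)) / 2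

/-- `H_{β,p}(x) = β xᵖ − I(x)`. -/
noncomputable def bahH (β : ℝ) (p : ℕ) (x : ℝ) : ℝ := β * x ^ p - bahI x

/-- `β*(p) = sup {β ≥ 0 : sup_{x∈[−1,1]} H_{β,p}(x) = 0}`. -/
noncomputable def betaStar (p : ℕ) : ℝ :=
  sSup {β : ℝ | 0 ≤ β ∧ sSup (bahH β p '' Set.Icc (-1 : ℝ) 1) = 0}

/-- inverse hyperbolic tangent. -/
noncomputable def arctanh (x : ℝ) : ℝ := Real.log ((1 + x) / (1 - x)) / 2

/-- `η_p(t) = p⁻¹ t^{1−p} arctanh t` for `t ≠ 0`, and `η_p(0) = 0`. -/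
noncomputable def etaFn (p : ℕ) (t : ℝ) : ℝ :=
  if t = 0 then 0 else (p : ℝ)⁻¹ * t ^ (1 - (p : ℤ)) * arctanh t

lemma arctanh_neg (x : ℝ) : arctanh (-x) = - arctanh x := by
  unfold arctanh
  rw [show (1 + -x) / (1 - -x) = ((1+x)/(1-x))⁻¹ by rw [inv_div]; ring_nf, Real.log_inv]
  ring

lemma arctanh_zero : arctanh 0 = 0 := by simp [arctanh]

lemma arctanh_pos {x : ℝ} (h0 : 0 < x) (h1 : x < 1) : 0 < arctanh x := by
  have : (1:ℝ) < (1+x)/(1-x) := by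
    rw [lt_div_iff₀ (by linarith)]; linarith
  have := Real.log_pos this
  unfold arctanh; linarith

lemma arctanh_lt {x y : ℝ} (hx : 0 ≤ x) (hxy : x < y) (hy : y < 1) :
    arctanh x < arctanh y := by
  have h1 : (0:ℝ) < (1+x)/(1-x) := div_pos (by linarith) (by linarith)
  have h2 : (1+x)/(1-x) < (1+y)/(1-y) := by
    rw [div_lt_div_iff₀ (by linarith) (by linarith)]; nlinarith
  have := Real.log_lt_log h1 h2
  unfold arctanh; linarith

lemma hasDerivAt_arctanh {x : ℝ} (h1 : -1 < x) (h2 : x < 1) :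
    HasDerivAt arctanh (1 / (1 - x^2)) x := by
  have hever : arctanh =ᶠ[nhds x] fun y => (Real.log (1+y) - Real.log (1-y)) / 2 := by
    filter_upwards [Ioo_mem_nhds h1 h2] with y hy
    unfold arctanh
    rw [Real.log_div (by linarith [hy.1] : (1:ℝ)+y ≠ 0) (by linarith [hy.2] : (1:ℝ)-y ≠ 0)]
  have d1 : HasDerivAt (fun y : ℝ => Real.log (1+y)) (1/(1+x)) x := by
    have := ((hasDerivAt_id x).const_add 1).log (by linarith : 1 + x ≠ 0)
    simpa using this
  have d2 : HasDerivAt (fun y : ℝ => Real.log (1-y)) (-(1/(1-x))) x := by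
    have := ((hasDerivAt_id x).const_sub 1).log (by linarith : 1 - x ≠ 0)
    simpa [neg_div] using this
  have := ((d1.sub d2).div_const 2)
  have heq : (1/(1+x) - -(1/(1-x))) / 2 = 1 / (1 - x^2) := by
    have hx1 : (1:ℝ)+x ≠ 0 := by linarith
    have hx2 : (1:ℝ)-x ≠ 0 := by linarith
    have hx3 : (1:ℝ)-x^2 ≠ 0 := by intro h; nlinarith
    field_simp
    ring
  rw [heq] at this
  exact this.congr_of_eventuallyEq hever

lemma hasDerivAt_bahI {x : ℝ} (h1 : -1 < x) (h2 : x < 1) :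
    HasDerivAt bahI (arctanh x) x := by
  have d1 : HasDerivAt (fun y : ℝ => (1+y) * Real.log (1+y)) (Real.log (1+x) + 1) x := by
    have := (Real.hasDerivAt_mul_log (by linarith : (1:ℝ) + x ≠ 0)).comp x
      ((hasDerivAt_id x).const_add 1)
    simpa [Function.comp_def] using this
  have d2 : HasDerivAt (fun y : ℝ => (1-y) * Real.log (1-y)) (-(Real.log (1-x) + 1)) x := by
    have := (Real.hasDerivAt_mul_log (by linarith : (1:ℝ) - x ≠ 0)).comp x
      ((hasDerivAt_id x).const_sub 1)
    simpa [mul_comm, Function.comp_def] using this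
  have := (d1.add d2).div_const 2
  have heq : (Real.log (1+x) + 1 + -(Real.log (1-x) + 1)) / 2 = arctanh x := by
    unfold arctanh
    rw [Real.log_div (by linarith : (1:ℝ)+x ≠ 0) (by linarith : (1:ℝ)-x ≠ 0)]
    ring
  rw [heq] at this
  exact this

lemma hasDerivAt_bahH {β : ℝ} {p : ℕ} {x : ℝ} (h1 : -1 < x) (h2 : x < 1) :
    HasDerivAt (bahH β p) (β * p * x^(p-1) - arctanh x) x := by
  have := ((hasDerivAt_pow p x).const_mul β).sub (hasDerivAt_bahI h1 h2)
  rw [mul_assoc]; exact this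

lemma continuous_bahI : Continuous bahI := by
  unfold bahI
  have h1 : Continuous fun x : ℝ => (1+x) * Real.log (1+x) :=
    (Real.continuous_mul_log).comp (continuous_const.add continuous_id)
  have h2 : Continuous fun x : ℝ => (1-x) * Real.log (1-x) :=
    (Real.continuous_mul_log).comp (continuous_const.sub continuous_id)
  exact (h1.add h2).div_const 2

lemma continuous_bahH (β : ℝ) (p : ℕ) : Continuous (bahH β p) :=
  (continuous_const.mul (continuous_pow p)).sub continuous_bahI

lemma bahI_neg (x : ℝ) : bahI (-x) = bahI x := by
  unfold bahI
  rw [show (1:ℝ) + -x = 1 - x by ring, show (1:ℝ) - -x = 1 + x by ring]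
  ring

lemma mul_log_ge {t : ℝ} (ht : 0 ≤ t) : t - 1 ≤ t * Real.log t := by
  rcases eq_or_lt_of_le ht with h | h
  · simp [← h]
  · have h2 := Real.log_le_sub_one_of_pos (show (0:ℝ) < t⁻¹ by positivity)
    rw [Real.log_inv] at h2
    have : t * (-Real.log t) ≤ t * (t⁻¹ - 1) := by
      apply mul_le_mul_of_nonneg_left h2 ht
    rw [mul_sub, mul_inv_cancel₀ h.ne'] at this
    nlinarith

lemma bahI_nonneg {x : ℝ} (h1 : -1 ≤ x) (h2 : x ≤ 1) : 0 ≤ bahI x := by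
  have a := mul_log_ge (show (0:ℝ) ≤ 1 + x by linarith)
  have b := mul_log_ge (show (0:ℝ) ≤ 1 - x by linarith)
  unfold bahI; linarith

lemma bahI_zero : bahI 0 = 0 := by simp [bahI]

lemma bahI_one : bahI 1 = Real.log 2 := by
  norm_num [bahI]


noncomputable def bahPsi (p : ℕ) (t : ℝ) : ℝ := t / (1 - t^2) - ((p:ℝ) - 1) * arctanh t

lemma bahPsi_zero (p : ℕ) : bahPsi p 0 = 0 := by simp [bahPsi, arctanh_zero]

lemma hasDerivAt_bahPsi {p : ℕ} {t : ℝ} (h1 : -1 < t) (h2 : t < 1) :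
    HasDerivAt (bahPsi p) ((2 - p + p * t^2) / (1 - t^2)^2) t := by
  have ht2 : (1:ℝ) - t^2 ≠ 0 := by nlinarith
  have d1 : HasDerivAt (fun y : ℝ => y / (1 - y^2))
      ((1 * (1 - t^2) - t * (0 - 2*t)) / (1 - t^2)^2) t := by
    exact (hasDerivAt_id t).div ((hasDerivAt_const t 1).sub
      (by simpa using (hasDerivAt_pow 2 t))) ht2
  have d2 := (hasDerivAt_arctanh h1 h2).const_mul ((p:ℝ) - 1)
  have := d1.sub d2
  have heq : (1 * (1 - t^2) - t * (0 - 2*t)) / (1 - t^2)^2 - ((p:ℝ)-1) * (1/(1-t^2))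
      = (2 - p + p * t^2) / (1 - t^2)^2 := by
    field_simp
    ring
  rw [heq] at this
  exact this

/-- on `[0, √((p-2)/p)]` the function ψ is strictly decreasing -/
lemma bahPsi_neg_of_small {p : ℕ} (hp : 3 ≤ p) {u : ℝ} (hu0 : 0 < u)
    (hu : u^2 ≤ ((p:ℝ) - 2)/p) : bahPsi p u < 0 := by
  have hp0 : (0:ℝ) < p := by positivity
  set c : ℝ := Real.sqrt (((p:ℝ) - 2)/p) with hc
  have hc2 : c^2 = ((p:ℝ)-2)/p := Real.sq_sqrt (by
    apply div_nonneg _ hp0.le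
    have : (3:ℝ) ≤ p := by exact_mod_cast hp
    linarith)
  have hp3 : (3:ℝ) ≤ p := by exact_mod_cast hp
  have hlt : ((p:ℝ)-2)/p < 1 := (div_lt_one hp0).2 (by linarith)
  have hc1 : c < 1 := by
    have h2 : c^2 < 1 := by rw [hc2]; exact hlt
    nlinarith [Real.sqrt_nonneg (((p:ℝ) - 2)/p)]
  have hcpos : 0 < c := Real.sqrt_pos.2 (div_pos (by linarith) hp0)
  have hanti : StrictAntiOn (bahPsi p) (Icc 0 c) := by
    apply strictAntiOn_of_deriv_neg (convex_Icc 0 c)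
    · intro x hx
      exact (hasDerivAt_bahPsi (by linarith [hx.1] : -1 < x)
        (lt_of_le_of_lt hx.2 hc1)).continuousAt.continuousWithinAt
    · intro x hx
      rw [interior_Icc] at hx
      have hx1 : x < 1 := lt_trans hx.2 hc1
      have hd := (hasDerivAt_bahPsi (p:=p) (by linarith [hx.1] : -1 < x) hx1).deriv
      rw [hd]
      apply div_neg_of_neg_of_pos
      · have hx2 : x^2 < ((p:ℝ)-2)/p := by nlinarith [hx.1, hx.2]
        rw [lt_div_iff₀ hp0] at hx2
        nlinarith
      · have hxx : x < 1 := lt_trans hx.2 hc1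
        have : x^2 < 1 := by nlinarith [hx.1]
        exact pow_pos (by linarith) 2
  have huc : u ≤ c := by
    nlinarith [Real.sqrt_nonneg (((p:ℝ)-2)/p), Real.sqrt_le_sqrt hu,
      Real.sqrt_sq hu0.le]
  have := hanti ⟨le_refl 0, hcpos.le⟩ ⟨hu0.le, huc⟩ hu0
  rwa [bahPsi_zero] at this

lemma bahPsi_strictMono {p : ℕ} (hp : 3 ≤ p) :
    StrictMonoOn (bahPsi p) (Ico (Real.sqrt (((p:ℝ) - 2)/p)) 1) := by
  have hp0 : (0:ℝ) < p := by positivity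
  set c : ℝ := Real.sqrt (((p:ℝ) - 2)/p) with hc
  have hc2 : c^2 = ((p:ℝ)-2)/p := Real.sq_sqrt (by
    apply div_nonneg _ hp0.le
    have : (3:ℝ) ≤ p := by exact_mod_cast hp
    linarith)
  have hcpos : 0 < c := by
    apply Real.sqrt_pos.2
    apply div_pos _ hp0
    have : (3:ℝ) ≤ p := by exact_mod_cast hp
    linarith
  apply strictMonoOn_of_deriv_pos (convex_Ico c 1)
  · intro x hx
    exact (hasDerivAt_bahPsi (by linarith [hcpos, hx.1] : -1 < x)
      hx.2).continuousAt.continuousWithinAt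
  · intro x hx
    rw [interior_Ico] at hx
    have hd := (hasDerivAt_bahPsi (p:=p) (by linarith [hcpos, hx.1] : -1 < x) hx.2).deriv
    rw [hd]
    apply div_pos
    · have hx2 : ((p:ℝ)-2)/p < x^2 := by rw [← hc2]; nlinarith [hx.1, hx.2, hcpos]
      rw [div_lt_iff₀ hp0] at hx2
      nlinarith
    · have hx0 : 0 < x := lt_trans hcpos hx.1
      have : x^2 < 1 := by nlinarith [hx.2]
      exact pow_pos (by linarith) 2

/-- if ψ ≥ 0 at u > 0 then ψ is positive beyond u -/
lemma bahPsi_pos_of_ge {p : ℕ} (hp : 3 ≤ p) {u v : ℝ} (hu0 : 0 < u)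
    (huv : u < v) (hv : v < 1) (hpu : 0 ≤ bahPsi p u) : 0 < bahPsi p v := by
  set c : ℝ := Real.sqrt (((p:ℝ) - 2)/p) with hc
  have hcu : c < u := by
    by_contra h
    push_neg at h
    have hu2 : u^2 ≤ ((p:ℝ)-2)/p := by
      have := Real.sq_sqrt (show (0:ℝ) ≤ ((p:ℝ)-2)/p by
        apply div_nonneg
        · have : (3:ℝ) ≤ p := by exact_mod_cast hp
          linarith
        · positivity)
      nlinarith [hu0]
    exact absurd hpu (not_le.2 (bahPsi_neg_of_small hp hu0 hu2))
  have := bahPsi_strictMono hp ⟨hcu.le, lt_trans huv hv⟩ ⟨(hcu.trans huv).le, hv⟩ huv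
  linarith

noncomputable def bahPhi (p : ℕ) (t : ℝ) : ℝ := (p:ℝ) * bahI t - t * arctanh t

lemma hasDerivAt_bahPhi {p : ℕ} {t : ℝ} (h1 : -1 < t) (h2 : t < 1) :
    HasDerivAt (bahPhi p) (-(bahPsi p t)) t := by
  have ht2 : (1:ℝ) - t^2 ≠ 0 := by nlinarith
  have d1 := (hasDerivAt_bahI h1 h2).const_mul (p:ℝ)
  have d2 := (hasDerivAt_id t).mul (hasDerivAt_arctanh h1 h2)
  have := d1.sub d2
  have heq : (p:ℝ) * arctanh t - (1 * arctanh t + id t * (1/(1-t^2))) = -(bahPsi p t) := by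
    unfold bahPsi
    simp only [id]
    field_simp
    ring
  rw [heq] at this
  exact this

/-- if ψ ≤ 0 on (0,t), then φ(t) ≥ 0, i.e. pI(t) ≥ t·arctanh t -/
lemma bahPhi_nonneg {p : ℕ} {t : ℝ} (ht0 : 0 < t) (ht1 : t < 1)
    (hψ : ∀ u ∈ Ioo 0 t, bahPsi p u ≤ 0) : t * arctanh t ≤ (p:ℝ) * bahI t := by
  have hmono : MonotoneOn (bahPhi p) (Icc 0 t) := by
    apply monotoneOn_of_deriv_nonneg (convex_Icc 0 t)
    · intro x hx
      exact (hasDerivAt_bahPhi (by linarith [hx.1] : -1 < x)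
        (lt_of_le_of_lt hx.2 ht1)).continuousAt.continuousWithinAt
    · intro x hx
      rw [interior_Icc] at hx
      exact ((hasDerivAt_bahPhi (p:=p) (by linarith [hx.1] : -1 < x)
        (lt_trans hx.2 ht1)).differentiableAt).differentiableWithinAt
    · intro x hx
      rw [interior_Icc] at hx
      rw [(hasDerivAt_bahPhi (p:=p) (by linarith [hx.1] : -1 < x)
        (lt_trans hx.2 ht1)).deriv]
      linarith [hψ x hx]
  have h0 : bahPhi p 0 = 0 := by simp [bahPhi, bahI_zero, arctanh_zero]
  have := hmono ⟨le_refl 0, ht0.le⟩ ⟨ht0.le, le_refl t⟩ ht0.le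
  rw [h0] at this
  unfold bahPhi at this
  linarith

noncomputable def bahEh (p : ℕ) (t : ℝ) : ℝ := t ^ ((1:ℤ) - p) * arctanh t

lemma hasDerivAt_bahEh {p : ℕ} {t : ℝ} (h0 : 0 < t) (h2 : t < 1) :
    HasDerivAt (bahEh p) (t ^ (-(p:ℤ)) * bahPsi p t) t := by
  have ht2 : (1:ℝ) - t^2 ≠ 0 := by nlinarith
  have d1 := (hasDerivAt_zpow ((1:ℤ) - p) t (Or.inl h0.ne')).mul
    (hasDerivAt_arctanh (by linarith) h2)
  have heq : ((((1:ℤ) - p : ℤ)):ℝ) * t ^ ((1:ℤ) - p - 1) * arctanh t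
      + t ^ ((1:ℤ) - p) * (1/(1-t^2)) = t ^ (-(p:ℤ)) * bahPsi p t := by
    have e1 : ((1:ℤ) - p - 1) = -(p:ℤ) := by ring
    have e2 : t ^ ((1:ℤ) - p) = t ^ (-(p:ℤ)) * t := by
      rw [← zpow_add_one₀ h0.ne', sub_eq_neg_add]
    rw [e1, e2]
    unfold bahPsi
    push_cast
    field_simp
    ring
  rw [heq] at d1
  exact d1

lemma bahEh_strictMono {p : ℕ} (hp : 3 ≤ p) {u : ℝ} (hu0 : 0 < u) (hu1 : u < 1)
    (hψ : ∀ x ∈ Ioo u 1, 0 < bahPsi p x) : StrictMonoOn (bahEh p) (Ico u 1) := by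
  apply strictMonoOn_of_deriv_pos (convex_Ico u 1)
  · intro x hx
    exact (hasDerivAt_bahEh (lt_of_lt_of_le hu0 hx.1)
      hx.2).continuousAt.continuousWithinAt
  · intro x hx
    rw [interior_Ico] at hx
    rw [(hasDerivAt_bahEh (p:=p) (lt_trans hu0 hx.1) hx.2).deriv]
    exact mul_pos (zpow_pos (lt_trans hu0 hx.1) _) (hψ x hx)

lemma zpow_one_sub_mul {t : ℝ} (ht : t ≠ 0) {p : ℕ} (hp : 1 ≤ p) :
    t ^ ((1:ℤ) - p) * t ^ (p-1) = 1 := by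
  rw [← zpow_natCast t (p-1), ← zpow_add₀ ht]
  have h0 : (1:ℤ) - p + ((p-1:ℕ):ℤ) = 0 := by omega
  rw [h0, zpow_zero]

lemma etaFn_lt_iff {p : ℕ} (hp : 3 ≤ p) {β t : ℝ} (ht0 : 0 < t) :
    β < etaFn p t ↔ (p:ℝ) * β * t ^ (p-1) < arctanh t := by
  have hp0 : (0:ℝ) < p := by positivity
  have htp : (0:ℝ) < t ^ (p-1) := pow_pos ht0 _
  rw [etaFn, if_neg ht0.ne']
  rw [show (1 : ℤ) - (p:ℤ) = ((1:ℤ) - p) from rfl]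
  constructor
  · intro h
    have := mul_lt_mul_of_pos_right h (mul_pos hp0 htp)
    calc (p:ℝ) * β * t^(p-1) = β * ((p:ℝ) * t^(p-1)) := by ring
      _ < (p:ℝ)⁻¹ * t ^ ((1:ℤ) - p) * arctanh t * ((p:ℝ) * t^(p-1)) := this
      _ = (t ^ ((1:ℤ) - p) * t^(p-1)) * arctanh t := by field_simp
      _ = arctanh t := by rw [zpow_one_sub_mul ht0.ne' (by omega)]; ring
  · intro h
    have h2 := mul_lt_mul_of_pos_left h (show (0:ℝ) < (p:ℝ)⁻¹ * t ^ ((1:ℤ)-p) by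
      positivity)
    calc β = ((p:ℝ)⁻¹ * t ^ ((1:ℤ)-p)) * ((p:ℝ) * β * t^(p-1)) := by
          rw [show (p:ℝ)⁻¹ * t ^ ((1:ℤ)-p) * ((p:ℝ) * β * t^(p-1))
            = ((p:ℝ)⁻¹ * (p:ℝ)) * (t ^ ((1:ℤ)-p) * t^(p-1)) * β by ring,
            zpow_one_sub_mul ht0.ne' (by omega), inv_mul_cancel₀ hp0.ne']
          ring
      _ < ((p:ℝ)⁻¹ * t ^ ((1:ℤ)-p)) * arctanh t := h2
      _ = (p:ℝ)⁻¹ * t ^ ((1:ℤ)-p) * arctanh t := by ring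

lemma bahEh_eq_of_crit {p : ℕ} (hp : 3 ≤ p) {β x : ℝ} (hx : 0 < x)
    (hcrit : arctanh x = (p:ℝ) * β * x ^ (p-1)) : bahEh p x = (p:ℝ) * β := by
  unfold bahEh
  rw [hcrit, show x ^ ((1:ℤ)-p) * ((p:ℝ) * β * x^(p-1))
    = (x ^ ((1:ℤ)-p) * x^(p-1)) * ((p:ℝ) * β) by ring,
    zpow_one_sub_mul hx.ne' (by omega), one_mul]

/-- the core inequality: a point in the lower branch has `H_β ≤ 0`. -/
lemma core_ineq {p : ℕ} (hp : 3 ≤ p) {β t m : ℝ} (ht0 : 0 < t) (htm : t ≤ m)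
    (hm1 : m < 1) (hηt : (p:ℝ) * β * t ^ (p-1) < arctanh t)
    (hcrit : arctanh m = (p:ℝ) * β * m ^ (p-1)) :
    (p:ℝ) * (β * t ^ p) ≤ (p:ℝ) * bahI t := by
  have ht1 : t < 1 := lt_of_le_of_lt htm hm1
  have hht : (p:ℝ) * β < bahEh p t := by
    unfold bahEh
    calc (p:ℝ) * β = (t ^ ((1:ℤ)-p) * t^(p-1)) * ((p:ℝ) * β) := by
          rw [zpow_one_sub_mul ht0.ne' (by omega), one_mul]
      _ = t ^ ((1:ℤ)-p) * ((p:ℝ) * β * t^(p-1)) := by ring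
      _ < t ^ ((1:ℤ)-p) * arctanh t := by
          apply mul_lt_mul_of_pos_left hηt
          positivity
  have hψ : ∀ u ∈ Ioo 0 t, bahPsi p u ≤ 0 := by
    intro u hu
    by_contra hcon
    push_neg at hcon
    have hmono := bahEh_strictMono hp hu.1 (lt_trans hu.2 ht1)
      (fun x hx => bahPsi_pos_of_ge hp hu.1 hx.1 hx.2 hcon.le)
    have hhm : bahEh p m = (p:ℝ) * β := bahEh_eq_of_crit hp (lt_of_lt_of_le ht0 htm) hcrit
    rcases eq_or_lt_of_le htm with rfl | hlt
    · rw [hhm] at hht; linarith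
    · have := hmono ⟨hu.2.le, ht1⟩ ⟨(hu.2.trans hlt).le, hm1⟩ hlt
      rw [hhm] at this
      linarith
  have hphi := bahPhi_nonneg ht0 ht1 hψ
  have h2 : (p:ℝ) * (β * t ^ p) = t * ((p:ℝ) * β * t^(p-1)) := by
    rw [show p = (p-1)+1 by omega, pow_succ]
    have : ((p-1)+1 : ℕ) = p := by omega
    rw [this]
    ring
  nlinarith [mul_lt_mul_of_pos_left hηt ht0]

lemma exists_pos_H {p : ℕ} (hp : 3 ≤ p) {β₀ : ℝ} (h0 : betaStar p < β₀) (hβ₀ : 0 ≤ β₀) :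
    ∃ x ∈ Icc (0:ℝ) 1, 0 < bahH β₀ p x := by
  have hbdd : ∀ β : ℝ, BddAbove (bahH β p '' Icc (-1:ℝ) 1) := fun β =>
    (isCompact_Icc.image (continuous_bahH β p)).bddAbove
  set S := {β : ℝ | 0 ≤ β ∧ sSup (bahH β p '' Set.Icc (-1 : ℝ) 1) = 0} with hS
  have hSbdd : BddAbove S := by
    refine ⟨Real.log 2, fun β hβ => ?_⟩
    have h1 : bahH β p 1 ≤ sSup (bahH β p '' Icc (-1:ℝ) 1) :=
      le_csSup (hbdd β) ⟨1, ⟨by norm_num, le_refl 1⟩, rfl⟩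
    rw [hβ.2] at h1
    have h2 : bahH β p 1 = β - Real.log 2 := by simp [bahH, bahI_one]
    rw [h2] at h1
    linarith
  have hβ₀S : β₀ ∉ S := fun h => absurd (le_csSup hSbdd h) (not_le.2 h0)
  have hne : sSup (bahH β₀ p '' Icc (-1:ℝ) 1) ≠ 0 := fun h => hβ₀S ⟨hβ₀, h⟩
  have hH0 : bahH β₀ p 0 = 0 := by
    simp [bahH, bahI_zero, zero_pow (show p ≠ 0 by omega)]
  have hge : 0 ≤ sSup (bahH β₀ p '' Icc (-1:ℝ) 1) := by
    have := le_csSup (hbdd β₀) ⟨0, ⟨by norm_num, by norm_num⟩, rfl⟩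
    rwa [hH0] at this
  obtain ⟨x, hx, hxmax⟩ := isCompact_Icc.exists_isMaxOn (⟨0, by norm_num⟩ :
    (Icc (-1:ℝ) 1).Nonempty) (continuous_bahH β₀ p).continuousOn
  have hsup : sSup (bahH β₀ p '' Icc (-1:ℝ) 1) = bahH β₀ p x :=
    IsGreatest.csSup_eq ⟨⟨x, hx, rfl⟩, by rintro y ⟨z, hz, rfl⟩; exact hxmax hz⟩
  have hpos : 0 < bahH β₀ p x := by
    rw [hsup] at hge hne
    exact lt_of_le_of_ne hge (Ne.symm hne)
  refine ⟨|x|, ⟨abs_nonneg x, abs_le.2 ⟨hx.1, hx.2⟩⟩, lt_of_lt_of_le hpos ?_⟩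
  have hIx : bahI |x| = bahI x := by
    rcases abs_cases x with ⟨h, _⟩ | ⟨h, _⟩
    · rw [h]
    · rw [h, bahI_neg]
  have hxp : x ^ p ≤ |x| ^ p := by
    rw [← abs_pow]; exact le_abs_self _
  unfold bahH
  rw [hIx]
  have := mul_le_mul_of_nonneg_left hxp hβ₀
  linarith

lemma max_lt_one {p : ℕ} (hp : 3 ≤ p) {β m : ℝ} (hβ : 0 < β) (hm0 : 0 < m)
    (hm1 : m ∈ Icc (-1:ℝ) 1) (hmax : IsMaxOn (bahH β p) (Icc (-1:ℝ) 1) m) :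
    m < 1 := by
  rcases lt_or_eq_of_le hm1.2 with h | h
  · exact h
  exfalso
  have hp0 : (0:ℝ) < p := by positivity
  set k : ℝ := 2*β*p + 2 with hk
  have hkpos : 0 < k := by positivity
  set a : ℝ := 1 - Real.exp (-k) with ha
  have hexp1 : Real.exp (-k) < 1 := Real.exp_lt_one_iff.2 (by linarith)
  have hexp0 : 0 < Real.exp (-k) := Real.exp_pos _
  have ha0 : 0 < a := by simp only [ha]; linarith
  have ha1 : a < 1 := by simp only [ha]; linarith
  have h1a : 1 - a = Real.exp (-k) := by simp [ha]
  have harc : β * p < arctanh a := by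
    have hfrac : (1:ℝ)/(1-a) ≤ (1+a)/(1-a) := by
      gcongr
      · linarith
    have hlog : Real.log (1/(1-a)) ≤ Real.log ((1+a)/(1-a)) :=
      Real.log_le_log (by rw [h1a]; positivity) hfrac
    have hval : Real.log (1/(1-a)) = k := by
      rw [h1a, Real.exp_neg, one_div, inv_inv, Real.log_exp]
    rw [hval] at hlog
    unfold arctanh
    rw [hk] at hlog
    linarith
  obtain ⟨c, hc, hslope⟩ := exists_hasDerivAt_eq_slope (bahH β p)
    (fun x => β*(p:ℝ)*x^(p-1) - arctanh x) ha1
    (Continuous.continuousOn (continuous_bahH β p))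
    (fun x hx => hasDerivAt_bahH (by linarith [hx.1]) hx.2)
  have hcd : β*(p:ℝ)*c^(p-1) - arctanh c < 0 := by
    have hc0 : 0 < c := lt_trans ha0 hc.1
    have h1 : c^(p-1) ≤ 1 := pow_le_one₀ hc0.le hc.2.le
    have h2 : arctanh a < arctanh c := arctanh_lt ha0.le hc.1 hc.2
    have h3 : β*(p:ℝ)*c^(p-1) ≤ β*(p:ℝ) := by
      have := mul_le_mul_of_nonneg_left h1 (show (0:ℝ) ≤ β*(p:ℝ) by positivity)
      linarith
    linarith
  rw [hslope] at hcd
  have hd : (0:ℝ) < 1 - a := by linarith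
  have hnum : bahH β p 1 - bahH β p a < 0 := by
    have := mul_neg_of_neg_of_pos hcd hd
    rwa [div_mul_cancel₀ _ hd.ne'] at this
  have hle : bahH β p a ≤ bahH β p m := hmax ⟨by linarith, ha1.le⟩
  rw [h] at hle
  rw [← h] at hnum
  rw [h] at hnum
  linarith

lemma etaFn_lt_iff_bahEh {p : ℕ} (hp : 3 ≤ p) {β t : ℝ} (ht0 : 0 < t) :
    β < etaFn p t ↔ (p:ℝ) * β < bahEh p t := by
  have hp0 : (0:ℝ) < p := by positivity
  rw [etaFn, if_neg ht0.ne']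
  have he : (p:ℝ)⁻¹ * t ^ ((1:ℤ) - p) * arctanh t = bahEh p t / p := by
    unfold bahEh
    field_simp
  rw [he, lt_div_iff₀ hp0]
  constructor <;> intro h <;> nlinarith

/-- For `p ≥ 3` and `β > β₀ ≥ log 2` with `β₀ > β*(p)`, with `m = m_*(β,p)` the positive
global maximizer of `H_{β,p}` on `[−1,1]`:
`sup_{x ∈ η_p⁻¹((β,∞))} H_{β₀,p}(x) = sup_{x ∈ (m, 1]} H_{β₀,p}(x)`, i.e. the Bahadur
slopes of the MPL and ML tests coincide when the null parameter is at least `log 2`. -/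
theorem statement9 (p : ℕ) (hp : 3 ≤ p) (β β₀ : ℝ) (h0 : betaStar p < β₀)
    (hlog : Real.log 2 ≤ β₀) (h1 : β₀ < β)
    (m : ℝ) (hm0 : 0 < m) (hm1 : m ∈ Set.Icc (-1 : ℝ) 1)
    (hmax : IsMaxOn (bahH β p) (Set.Icc (-1 : ℝ) 1) m) :
    sSup (bahH β₀ p '' {t ∈ Set.Icc (-1 : ℝ) 1 | β < etaFn p t})
      = sSup (bahH β₀ p '' Set.Ioc m 1) := by
  have hβ₀pos : 0 < β₀ := lt_of_lt_of_le (Real.log_pos (by norm_num)) hlog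
  have hβpos : 0 < β := lt_trans hβ₀pos h1
  have hp0 : (0:ℝ) < p := by positivity
  have hm1' : m < 1 := max_lt_one hp hβpos hm0 hm1 hmax
  have hmneg : (-1:ℝ) < m := by linarith
  have hloc : IsLocalMax (bahH β p) m := hmax.isLocalMax (Icc_mem_nhds hmneg hm1')
  have hcrit0 := hloc.hasDerivAt_eq_zero (hasDerivAt_bahH hmneg hm1')
  have hcrit : arctanh m = (p:ℝ) * β * m ^ (p-1) := by linear_combination -hcrit0
  have hHm : 0 < bahH β p m := by
    obtain ⟨x, hx, hxpos⟩ := exists_pos_H hp h0 hβ₀pos.le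
    have h1x : bahH β₀ p x ≤ bahH β p x := by
      unfold bahH
      have : β₀ * x^p ≤ β * x^p := mul_le_mul_of_nonneg_right h1.le (pow_nonneg hx.1 p)
      linarith
    have h2x : bahH β p x ≤ bahH β p m := hmax ⟨by linarith [hx.1], hx.2⟩
    linarith
  have hψm : 0 ≤ bahPsi p m := by
    by_contra hneg
    push_neg at hneg
    have hψ : ∀ u ∈ Ioo 0 m, bahPsi p u ≤ 0 := by
      intro u hu
      by_contra hc
      push_neg at hc
      exact absurd (bahPsi_pos_of_ge hp hu.1 hu.2 hm1' hc.le) (not_lt.2 hneg.le)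
    have hphi := bahPhi_nonneg hm0 hm1' hψ
    rw [hcrit] at hphi
    have h2 : (p:ℝ) * (β * m ^ p) = m * ((p:ℝ) * β * m^(p-1)) := by
      rw [show p = (p-1)+1 by omega, pow_succ]
      have e : ((p-1)+1 : ℕ) = p := by omega
      rw [e]
      ring
    rw [← h2] at hphi
    have hb : β * m^p ≤ bahI m := by nlinarith
    have : bahH β p m ≤ 0 := by unfold bahH; linarith
    linarith
  have hsub : ∀ x ∈ Ioo m 1, β < etaFn p x := by
    intro x hx
    have hψx : ∀ y ∈ Ioo m 1, 0 < bahPsi p y := fun y hy =>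
      bahPsi_pos_of_ge hp hm0 hy.1 hy.2 hψm
    have hmono := bahEh_strictMono hp hm0 hm1' hψx
    have hhm : bahEh p m = (p:ℝ) * β := bahEh_eq_of_crit hp hm0 hcrit
    have hlt := hmono ⟨le_refl m, hm1'⟩ ⟨hx.1.le, hx.2⟩ hx.1
    rw [hhm] at hlt
    exact (etaFn_lt_iff_bahEh hp (lt_trans hm0 hx.1)).2 hlt
  have hbddIcc : BddAbove (bahH β₀ p '' Icc (-1:ℝ) 1) :=
    (isCompact_Icc.image (continuous_bahH β₀ p)).bddAbove
  have hsubA : {t ∈ Icc (-1:ℝ) 1 | β < etaFn p t} ⊆ Icc (-1:ℝ) 1 := sep_subset _ _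
  have hsubB : Ioc m 1 ⊆ Icc (-1:ℝ) 1 := fun x hx => ⟨by linarith [hx.1], hx.2⟩
  have hbddA : BddAbove (bahH β₀ p '' {t ∈ Icc (-1:ℝ) 1 | β < etaFn p t}) :=
    hbddIcc.mono (image_mono hsubA)
  have hbddB : BddAbove (bahH β₀ p '' Ioc m 1) := hbddIcc.mono (image_mono hsubB)
  have hH1 : bahH β₀ p 1 = β₀ - Real.log 2 := by simp [bahH, bahI_one]
  have hH1B : bahH β₀ p 1 ≤ sSup (bahH β₀ p '' Ioc m 1) :=
    le_csSup hbddB ⟨1, ⟨hm1', le_refl 1⟩, rfl⟩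
  have key : ∀ s : ℝ, 0 < s → s ≤ 1 → β < etaFn p s →
      bahH β₀ p s ≤ sSup (bahH β₀ p '' Ioc m 1) := by
    intro s hs0 hs1 hηs
    rcases le_or_gt s m with hsm | hms
    · have hηt : (p:ℝ)*β*s^(p-1) < arctanh s := (etaFn_lt_iff hp hs0).1 hηs
      have hcore := core_ineq hp hs0 hsm hm1' hηt hcrit
      have hIs : β * s^p ≤ bahI s := by nlinarith
      have hH : bahH β₀ p s ≤ 0 := by
        unfold bahH
        have : β₀ * s^p ≤ β * s^p :=
          mul_le_mul_of_nonneg_right h1.le (pow_nonneg hs0.le p)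
        linarith
      have h2 : (0:ℝ) ≤ β₀ - Real.log 2 := by linarith
      linarith
    · exact le_csSup hbddB ⟨s, ⟨hms, hs1⟩, rfl⟩
  have hmidA : (m+1)/2 ∈ {t ∈ Icc (-1:ℝ) 1 | β < etaFn p t} :=
    ⟨⟨by linarith, by linarith⟩, hsub _ ⟨by linarith, by linarith⟩⟩
  apply le_antisymm
  · apply csSup_le (Set.Nonempty.image _ ⟨(m+1)/2, hmidA⟩)
    rintro y ⟨t, ⟨htIcc, htη⟩, rfl⟩
    rcases lt_trichotomy t 0 with hneg | h0t | hpos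
    · set a := -t with hadef
      have ha0 : 0 < a := by simp only [hadef]; linarith
      have ha1 : a ≤ 1 := by simp only [hadef]; linarith [htIcc.1]
      have hta : t = -a := by simp [hadef]
      rcases eq_or_lt_of_le ha1 with ha1e | ha1l
      · exfalso
        have htm1 : t = -1 := by rw [hta, ha1e]
        have harc : arctanh t = 0 := by
          rw [htm1]; unfold arctanh; norm_num
        have hz : etaFn p t = 0 := by
          rw [etaFn, if_neg (show t ≠ 0 by linarith), harc]; ring
        rw [hz] at htη
        linarith
      · rcases Nat.even_or_odd p with hpe | hpo
        · have hodd : Odd ((1:ℤ) - p) := by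
            rcases hpe with ⟨k, hk⟩
            exact ⟨-(k:ℤ), by push_cast [hk]; ring⟩
          have hη : etaFn p a = etaFn p t := by
            rw [etaFn, etaFn, if_neg ha0.ne', if_neg (show t ≠ 0 by linarith)]
            have e1 : t ^ ((1:ℤ) - p) = -(a ^ ((1:ℤ) - p)) := by
              rw [hadef, Odd.neg_zpow hodd, neg_neg]
            have e2 : arctanh t = -arctanh a := by
              rw [hadef, arctanh_neg, neg_neg]
            rw [e1, e2]
            ring
          have hHeq : bahH β₀ p t = bahH β₀ p a := by
            unfold bahH
            rw [hta, bahI_neg, Even.neg_pow hpe]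
          rw [hHeq]
          exact key a ha0 ha1 (by rw [hη]; exact htη)
        · exfalso
          have heven : Even ((1:ℤ) - p) := by
            rcases hpo with ⟨k, hk⟩
            exact ⟨-(k:ℤ), by push_cast [hk]; ring⟩
          have harcpos : 0 < arctanh a := arctanh_pos ha0 ha1l
          have hlt0 : etaFn p t < 0 := by
            rw [etaFn, if_neg (show t ≠ 0 by linarith), hta,
              Even.neg_zpow heven, arctanh_neg]
            have hz : 0 < a ^ ((1:ℤ) - p) := zpow_pos ha0 _
            have hpi : 0 < (p:ℝ)⁻¹ := by positivity
            rw [mul_neg]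
            linarith [mul_pos (mul_pos hpi hz) harcpos]
          linarith
    · exfalso
      rw [h0t] at htη
      norm_num [etaFn] at htη
      linarith
    · exact key t hpos htIcc.2 htη
  · apply csSup_le (Set.Nonempty.image _ ⟨1, show (1:ℝ) ∈ Ioc m 1 from ⟨hm1', le_refl 1⟩⟩)
    rintro y ⟨x, hx, rfl⟩
    rcases lt_or_eq_of_le hx.2 with hx1 | hx1
    · exact le_csSup hbddA ⟨x, ⟨⟨by linarith [hx.1], hx1.le⟩, hsub x ⟨hx.1, hx1⟩⟩, rfl⟩
    · rw [hx1]
      have htend : Tendsto (bahH β₀ p) (nhdsWithin (1:ℝ) (Iio 1))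
          (nhds (bahH β₀ p 1)) :=
        ((continuous_bahH β₀ p).tendsto 1).mono_left nhdsWithin_le_nhds
      refine le_of_tendsto htend ?_
      filter_upwards [Ioo_mem_nhdsLT_of_mem
        (show (1:ℝ) ∈ Ioc m 1 from ⟨hm1', le_refl 1⟩)] with y hy
      exact le_csSup hbddA ⟨y, ⟨⟨by linarith [hy.1], hy.2.le⟩, hsub y hy⟩, rfl⟩
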